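/- Let μ be a Borel measure on ℝ^d (d ≥ 1, Euclidean metric) with μ(ℝ^d) < ∞, determined by a strictly positive weight w (i.e. dμ = w dx with respect to Lebesgue measure) such that for every n ∈ ℕ there are constants 0 < c_n ≤ C_n < ∞ with c_n ≤ w(x) ≤ C_n for all x in the ball B_n(0). Then both the non-centered maximal operator M and the centered maximal operator M^c associated with (ℝ^d, d_e, μ) possess the dichotomy property. -/

import Mathlib

open MeasureTheory Metric Filter Set ENNReal

/-- The centered Hardy–Littlewood maximal function of `f` at `x`,
with respect to the measure `μ`. -/
noncomputable def centeredMaximal {X : Type*} [MeasurableSpace X] [PseudoMetricSpace X]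
    (μ : Measure X) (f : X → ℝ) (x : X) : ℝ≥0∞ :=
  ⨆ (r : ℝ) (_ : 0 < r),
    (∫⁻ y in Metric.ball x r, ENNReal.ofReal |f y| ∂μ) / μ (Metric.ball x r)

/-- The non-centered Hardy–Littlewood maximal function of `f` at `x`:
the supremum is taken over all open balls containing `x`. -/
noncomputable def noncenteredMaximal {X : Type*} [MeasurableSpace X] [PseudoMetricSpace X]
    (μ : Measure X) (f : X → ℝ) (x : X) : ℝ≥0∞ :=
  ⨆ (c : X) (r : ℝ) (_ : 0 < r) (_ : x ∈ Metric.ball c r),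
    (∫⁻ y in Metric.ball c r, ENNReal.ofReal |f y| ∂μ) / μ (Metric.ball c r)

/-- `f ∈ L¹_loc(μ)`: `∫_B |f| dμ < ∞` for every open ball `B`. -/
def LocallyIntegrableBall {X : Type*} [MeasurableSpace X] [PseudoMetricSpace X]
    (μ : Measure X) (f : X → ℝ) : Prop :=
  ∀ (c : X) (r : ℝ), 0 < r → (∫⁻ y in Metric.ball c r, ENNReal.ofReal |f y| ∂μ) < ⊤

set_option maxHeartbeats 2000000 in
/-- Let `μ = w dx` be a finite measure on `ℝ^d` with a strictly positive
weight `w` that is bounded above and bounded away from `0` on each ball `B_n(0)`. Then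
both the non-centered and the centered maximal operators possess the dichotomy property. -/
theorem dichotomy_finite_weighted (d : ℕ) (hd : 1 ≤ d)
    (w : EuclideanSpace ℝ (Fin d) → ℝ) (hw : ∀ x, 0 < w x)
    (μ : Measure (EuclideanSpace ℝ (Fin d)))
    (hμ : μ = volume.withDensity (fun x => ENNReal.ofReal (w x)))
    (hfin : μ Set.univ < ⊤)
    (hbd : ∀ n : ℕ, ∃ c C : ℝ, 0 < c ∧ c ≤ C ∧
      ∀ x ∈ Metric.ball (0 : EuclideanSpace ℝ (Fin d)) (n : ℝ), c ≤ w x ∧ w x ≤ C) :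
    (∀ f : EuclideanSpace ℝ (Fin d) → ℝ, LocallyIntegrableBall μ f →
      μ {x | noncenteredMaximal μ f x = ⊤} = 0 ∨
        {x | noncenteredMaximal μ f x = ⊤} = Set.univ) ∧
    (∀ f : EuclideanSpace ℝ (Fin d) → ℝ, LocallyIntegrableBall μ f →
      μ {x | centeredMaximal μ f x = ⊤} = 0 ∨
        {x | centeredMaximal μ f x = ⊤} = Set.univ) := by
  classical
  choose cc CC hcc hccC hbdw using hbd
  haveI : IsFiniteMeasure μ := ⟨hfin⟩
  haveI : Nontrivial (EuclideanSpace ℝ (Fin d)) := by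
    refine Module.nontrivial_of_finrank_pos (R := ℝ) ?_
    rw [finrank_euclideanSpace_fin]; omega
  have hfr : Module.finrank ℝ (EuclideanSpace ℝ (Fin d)) = d := finrank_euclideanSpace_fin
  set vb := volume (ball (0 : EuclideanSpace ℝ (Fin d)) 1) with hvb
  have hvb_pos : vb ≠ 0 := (measure_ball_pos _ _ one_pos).ne'
  have hvb_top : vb ≠ ⊤ := measure_ball_lt_top.ne
  have hball : ∀ (x : EuclideanSpace ℝ (Fin d)) (r : ℝ), 0 ≤ r →
      volume (ball x r) = ENNReal.ofReal (r ^ d) * vb := by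
    intro x r hr
    rw [Measure.addHaar_ball volume x hr, hfr]
  -- μ vs volume comparison on balls contained in ball 0 m
  have hmu_le : ∀ (m : ℕ) (s : Set (EuclideanSpace ℝ (Fin d))), MeasurableSet s →
      s ⊆ ball 0 (m : ℝ) → μ s ≤ ENNReal.ofReal (CC m) * volume s := by
    intro m s hs hsub
    rw [hμ, withDensity_apply _ hs]
    calc ∫⁻ y in s, ENNReal.ofReal (w y) ∂volume
        ≤ ∫⁻ _ in s, ENNReal.ofReal (CC m) ∂volume := by
          refine lintegral_mono_ae ?_
          filter_upwards [ae_restrict_mem hs] with y hy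
          exact ENNReal.ofReal_le_ofReal (hbdw m y (hsub hy)).2
      _ = ENNReal.ofReal (CC m) * volume s := setLIntegral_const s _
  have hmu_ge : ∀ (m : ℕ) (s : Set (EuclideanSpace ℝ (Fin d))), MeasurableSet s →
      s ⊆ ball 0 (m : ℝ) → ENNReal.ofReal (cc m) * volume s ≤ μ s := by
    intro m s hs hsub
    rw [hμ, withDensity_apply _ hs]
    calc ENNReal.ofReal (cc m) * volume s
        = ∫⁻ _ in s, ENNReal.ofReal (cc m) ∂volume := (setLIntegral_const s _).symm
      _ ≤ ∫⁻ y in s, ENNReal.ofReal (w y) ∂volume := by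
          refine lintegral_mono_ae ?_
          filter_upwards [ae_restrict_mem hs] with y hy
          exact ENNReal.ofReal_le_ofReal (hbdw m y (hsub hy)).1
  -- positivity of μ on balls
  have hμpos : ∀ (x : EuclideanSpace ℝ (Fin d)) (r : ℝ), 0 < r → 0 < μ (ball x r) := by
    intro x r hr
    set r' : ℝ := min r 1 with hr'
    have hr'0 : 0 < r' := lt_min hr one_pos
    obtain ⟨m, hm⟩ := exists_nat_ge (‖x‖ + r')
    have hsub : ball x r' ⊆ ball 0 (m : ℝ) := by
      intro z hz
      rw [mem_ball] at hz ⊢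
      calc dist z 0 ≤ dist z x + dist x 0 := dist_triangle _ _ _
        _ < r' + ‖x‖ := by rw [dist_zero_right]; linarith
        _ ≤ m := by linarith
    have h1 : ENNReal.ofReal (cc m) * volume (ball x r') ≤ μ (ball x r') :=
      hmu_ge m _ measurableSet_ball hsub
    have h2 : 0 < ENNReal.ofReal (cc m) * volume (ball x r') :=
      ENNReal.mul_pos (by simpa using (hcc m)) (measure_ball_pos _ _ hr'0).ne'
    exact lt_of_lt_of_le (lt_of_lt_of_le h2 h1)
      (measure_mono (ball_subset_ball (min_le_left _ _)))
  -- the master claim; `LocallyIntegrableBall` is not needed.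
  have key : ∀ f : EuclideanSpace ℝ (Fin d) → ℝ,
      (μ {x | noncenteredMaximal μ f x = ⊤} = 0 ∨
        {x | noncenteredMaximal μ f x = ⊤} = Set.univ) ∧
      (μ {x | centeredMaximal μ f x = ⊤} = 0 ∨
        {x | centeredMaximal μ f x = ⊤} = Set.univ) := by
    intro f
    set g : EuclideanSpace ℝ (Fin d) → ℝ≥0∞ := fun y => ENNReal.ofReal |f y| with hg
    set I : ℝ≥0∞ := ⨆ n : ℕ, ∫⁻ y in ball (0 : EuclideanSpace ℝ (Fin d)) (n : ℝ), g y ∂μ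
      with hIdef
    have hIball : ∀ (c : EuclideanSpace ℝ (Fin d)) (r : ℝ),
        (∫⁻ y in ball c r, g y ∂μ) ≤ I := by
      intro c r
      obtain ⟨n, hn⟩ := exists_nat_ge (‖c‖ + r)
      have hsub : ball c r ⊆ ball 0 (n : ℝ) := by
        intro z hz
        rw [mem_ball] at hz ⊢
        calc dist z 0 ≤ dist z c + dist c 0 := dist_triangle _ _ _
          _ < r + ‖c‖ := by rw [dist_zero_right]; linarith
          _ ≤ n := by linarith
      exact le_trans (lintegral_mono_set hsub)
        (le_iSup (fun n : ℕ => ∫⁻ y in ball (0 : EuclideanSpace ℝ (Fin d)) (n : ℝ), g y ∂μ) n)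
    have hcn : ∀ x, centeredMaximal μ f x ≤ noncenteredMaximal μ f x := by
      intro x
      refine iSup_le fun r => iSup_le fun hr => ?_
      exact le_iSup_of_le x (le_iSup_of_le r (le_iSup_of_le hr
        (le_iSup_of_le (mem_ball_self hr) le_rfl)))
    by_cases hItop : I = ⊤
    · -- infinite integral : maximal function is everywhere infinite
      have hcent : ∀ x, centeredMaximal μ f x = ⊤ := by
        intro x
        rw [eq_top_iff]
        have hle : ∀ n : ℕ,
            (∫⁻ y in ball (0 : EuclideanSpace ℝ (Fin d)) (n : ℝ), g y ∂μ) / μ univ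
              ≤ centeredMaximal μ f x := by
          intro n
          set R : ℝ := ‖x‖ + n + 1 with hR
          have hR0 : 0 < R := by positivity
          have hsub : ball (0 : EuclideanSpace ℝ (Fin d)) (n : ℝ) ⊆ ball x R := by
            intro z hz
            rw [mem_ball] at hz ⊢
            calc dist z x ≤ dist z 0 + dist 0 x := dist_triangle _ _ _
              _ < n + ‖x‖ := by rw [dist_zero_left]; linarith
              _ < R := by simp [hR]; linarith
          calc (∫⁻ y in ball (0 : EuclideanSpace ℝ (Fin d)) (n : ℝ), g y ∂μ) / μ univ
              ≤ (∫⁻ y in ball x R, g y ∂μ) / μ (ball x R) :=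
                ENNReal.div_le_div (lintegral_mono_set hsub) (measure_mono (subset_univ _))
            _ ≤ centeredMaximal μ f x := le_iSup_of_le R (le_iSup_of_le hR0 le_rfl)
        have : I / μ univ ≤ centeredMaximal μ f x := by
          rw [hIdef, iSup_div]
          exact iSup_le hle
        have htop : I / μ univ = ⊤ := by
          rw [hItop, ENNReal.top_div, if_neg hfin.ne]
        rw [← htop]; exact this
      refine ⟨Or.inr ?_, Or.inr ?_⟩ <;>
        · rw [eq_univ_iff_forall]
          intro x
          simp only [mem_setOf_eq]
          first
            | exact eq_top_iff.2 ((hcent x) ▸ hcn x)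
            | exact hcent x
    · -- finite integral : maximal function is a.e. finite
      have hIlt : I < ⊤ := lt_top_iff_ne_top.2 hItop
      set ρ : Measure (EuclideanSpace ℝ (Fin d)) := μ.withDensity g with hρdef
      have hρs : ∀ s : Set (EuclideanSpace ℝ (Fin d)), MeasurableSet s →
          ρ s = ∫⁻ y in s, g y ∂μ := fun s hs => withDensity_apply g hs
      have hρuniv : ρ univ ≤ I := by
        rw [← iUnion_ball_nat (0 : EuclideanSpace ℝ (Fin d))]
        rw [Directed.measure_iUnion
          ((monotone_nat_of_le_succ fun n => ball_subset_ball (by exact_mod_cast Nat.le_succ n)).directed_le)]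
        refine iSup_le fun n => ?_
        rw [hρs _ measurableSet_ball]
        exact hIball 0 n
      haveI : IsFiniteMeasure ρ := ⟨lt_of_le_of_lt hρuniv hIlt⟩
      -- pointwise finiteness at Lebesgue points
      have hpt : ∀ (n : ℕ) (x : EuclideanSpace ℝ (Fin d)), x ∈ ball (0 : EuclideanSpace ℝ (Fin d)) (n : ℝ) →
          Tendsto (fun r => ρ (closedBall x r) / μ (closedBall x r)) (nhdsWithin 0 (Ioi 0))
            (nhds (ρ.rnDeriv μ x)) →
          ρ.rnDeriv μ x < ⊤ → noncenteredMaximal μ f x < ⊤ := by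
        intro n x hxball hT hD
        set m : ℕ := n + 2 with hm
        set L : ℝ≥0∞ := ρ.rnDeriv μ x + 1 with hL
        have hLtop : L ≠ ⊤ := by
          simp [hL, ENNReal.add_eq_top, hD.ne]
        have h1 : ∀ᶠ r in nhdsWithin (0:ℝ) (Ioi 0),
            ρ (closedBall x r) / μ (closedBall x r) < L :=
          hT.eventually_lt_const (ENNReal.lt_add_right hD.ne one_ne_zero)
        rw [eventually_iff, mem_nhdsGT_iff_exists_Ioo_subset] at h1
        obtain ⟨u, hu, hIoo⟩ := h1
        set ε : ℝ := min u 1 with hε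
        have hε0 : 0 < ε := lt_min hu one_pos
        have hε1 : ε ≤ 1 := min_le_right _ _
        set r₀ : ℝ := ε / 2 with hr₀
        have hr₀0 : 0 < r₀ := by positivity
        have hxn : dist x 0 < (n : ℝ) := mem_ball.1 hxball
        have hxnorm : ‖x‖ < (n : ℝ) := by rwa [dist_zero_right] at hxn
        -- the small-radius bound
        set Ks : ℝ≥0∞ := L * ENNReal.ofReal (CC m) * ENNReal.ofReal ((3:ℝ) ^ d) /
          ENNReal.ofReal (cc m) with hKs
        have hsmall : ∀ (c : EuclideanSpace ℝ (Fin d)) (r : ℝ), 0 < r → x ∈ ball c r → r < r₀ →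
            (∫⁻ y in ball c r, g y ∂μ) / μ (ball c r) ≤ Ks := by
          intro c r hr hxc hrr
          have hxcd : dist x c < r := mem_ball.1 hxc
          have hsubcb : ball c r ⊆ closedBall x (2 * r) := by
            intro z hz
            rw [mem_ball] at hz
            rw [mem_closedBall]
            calc dist z x ≤ dist z c + dist c x := dist_triangle _ _ _
              _ ≤ r + r := by rw [dist_comm c x]; linarith
              _ = 2 * r := by ring
          have hcb0m : closedBall x (2 * r) ⊆ ball 0 (m : ℝ) := by
            intro z hz
            rw [mem_closedBall] at hz
            rw [mem_ball]
            calc dist z 0 ≤ dist z x + dist x 0 := dist_triangle _ _ _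
              _ ≤ 2 * r + ‖x‖ := by rw [dist_zero_right]; linarith
              _ < (m : ℝ) := by
                  have : 2 * r < 2 * r₀ := by linarith
                  have hε' : 2 * r₀ = ε := by rw [hr₀]; ring
                  push_cast [hm]
                  nlinarith [hε1, hxnorm]
          have h3r : ball x (3 * r) ⊆ ball 0 (m : ℝ) := by
            intro z hz
            rw [mem_ball] at hz ⊢
            calc dist z 0 ≤ dist z x + dist x 0 := dist_triangle _ _ _
              _ < 3 * r + ‖x‖ := by rw [dist_zero_right]; linarith
              _ ≤ (m : ℝ) := by
                  have : 3 * r < 3 * r₀ := by linarith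
                  push_cast [hm]
                  nlinarith [hε1, hxnorm]
          have hcrsub : ball c r ⊆ ball 0 (m : ℝ) := fun z hz => hcb0m (hsubcb hz)
          have h2rIoo : 2 * r ∈ Ioo (0:ℝ) u := by
            constructor
            · positivity
            · have : 2 * r < ε := by rw [hr₀] at hrr; linarith
              exact lt_of_lt_of_le this (min_le_left _ _)
          have hratio := hIoo h2rIoo
          have hcbpos : μ (closedBall x (2 * r)) ≠ 0 := by
            refine (lt_of_lt_of_le (hμpos x (2*r) (by positivity)) (measure_mono ball_subset_closedBall)).ne'
          have hcbtop : μ (closedBall x (2 * r)) ≠ ⊤ := (measure_lt_top μ _).ne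
          have hρcb : ρ (closedBall x (2 * r)) ≤ L * μ (closedBall x (2 * r)) :=
            le_of_lt ((ENNReal.div_lt_iff (Or.inl hcbpos) (Or.inl hcbtop)).1 hratio)
          have hnum : (∫⁻ y in ball c r, g y ∂μ) ≤ ρ (closedBall x (2 * r)) := by
            rw [hρs _ measurableSet_closedBall]
            exact lintegral_mono_set hsubcb
          have hμcb : μ (closedBall x (2 * r)) ≤
              ENNReal.ofReal (CC m) * (ENNReal.ofReal ((3:ℝ) ^ d) * (ENNReal.ofReal (r ^ d) * vb)) := by
            calc μ (closedBall x (2 * r)) ≤ μ (ball x (3 * r)) :=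
                  measure_mono (closedBall_subset_ball (by linarith))
              _ ≤ ENNReal.ofReal (CC m) * volume (ball x (3 * r)) :=
                  hmu_le m _ measurableSet_ball h3r
              _ = ENNReal.ofReal (CC m) * (ENNReal.ofReal ((3:ℝ) ^ d) * (ENNReal.ofReal (r ^ d) * vb)) := by
                  rw [hball x (3 * r) (by positivity)]
                  rw [mul_pow, ENNReal.ofReal_mul (by positivity), mul_assoc]
          have hden : ENNReal.ofReal (cc m) * (ENNReal.ofReal (r ^ d) * vb) ≤ μ (ball c r) := by
            have := hmu_ge m _ measurableSet_ball hcrsub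
            rwa [hball c r hr.le] at this
          have ht0 : ENNReal.ofReal (r ^ d) * vb ≠ 0 :=
            (ENNReal.mul_pos (by simp [ENNReal.ofReal_pos]; positivity) hvb_pos).ne'
          have httop : ENNReal.ofReal (r ^ d) * vb ≠ ⊤ :=
            ENNReal.mul_ne_top ENNReal.ofReal_ne_top hvb_top
          calc (∫⁻ y in ball c r, g y ∂μ) / μ (ball c r)
              ≤ (L * ENNReal.ofReal (CC m) * ENNReal.ofReal ((3:ℝ) ^ d) * (ENNReal.ofReal (r ^ d) * vb)) /
                  (ENNReal.ofReal (cc m) * (ENNReal.ofReal (r ^ d) * vb)) := by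
                refine ENNReal.div_le_div ?_ hden
                calc (∫⁻ y in ball c r, g y ∂μ) ≤ L * μ (closedBall x (2 * r)) := hnum.trans hρcb
                  _ ≤ L * (ENNReal.ofReal (CC m) * (ENNReal.ofReal ((3:ℝ) ^ d) * (ENNReal.ofReal (r ^ d) * vb))) :=
                      mul_le_mul_right hμcb L
                  _ = L * ENNReal.ofReal (CC m) * ENNReal.ofReal ((3:ℝ) ^ d) * (ENNReal.ofReal (r ^ d) * vb) := by
                      ring
            _ = Ks := by
                rw [hKs, ENNReal.mul_div_mul_right _ _ ht0 httop]
        -- the large-radius bound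
        set δ : ℝ≥0∞ := ENNReal.ofReal (cc m) * (ENNReal.ofReal ((r₀ / 2) ^ d) * vb) with hδ
        have hδ0 : δ ≠ 0 := by
          refine (ENNReal.mul_pos ?_ (ENNReal.mul_pos ?_ hvb_pos).ne').ne'
          · simp [ENNReal.ofReal_pos]; exact hcc m
          · simp [ENNReal.ofReal_pos]; positivity
        have hlarge : ∀ (c : EuclideanSpace ℝ (Fin d)) (r : ℝ), 0 < r → x ∈ ball c r → r₀ ≤ r →
            (∫⁻ y in ball c r, g y ∂μ) / μ (ball c r) ≤ I / δ := by
          intro c r hr hxc hrr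
          have hxcd : dist x c < r := mem_ball.1 hxc
          -- find a ball of radius r₀/2 close to x inside ball c r
          obtain ⟨y, hyx, hysub⟩ : ∃ y : EuclideanSpace ℝ (Fin d),
              dist y x ≤ r₀ / 2 ∧ ball y (r₀ / 2) ⊆ ball c r := by
            by_cases hdc : dist x c ≤ r₀ / 2
            · refine ⟨c, by rwa [dist_comm] at hdc, ?_⟩
              exact ball_subset_ball (by linarith)
            · push_neg at hdc
              set D : ℝ := dist x c with hD2
              have hD0 : 0 < D := lt_trans (by positivity) hdc
              set t : ℝ := r₀ / (2 * D) with ht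
              have ht0 : 0 < t := by positivity
              have ht1 : t < 1 := by
                rw [ht, div_lt_one (by positivity)]
                linarith
              refine ⟨x + t • (c - x), ?_, ?_⟩
              · rw [dist_comm, dist_self_add_right, norm_smul, Real.norm_eq_abs,
                  abs_of_pos ht0]
                have : ‖c - x‖ = D := by rw [hD2, dist_comm, dist_eq_norm]
                rw [this, ht]
                have hDne : D ≠ 0 := ne_of_gt hD0
                have heq : r₀ / (2 * D) * D = r₀ / 2 := by field_simp
                exact le_of_eq heq
              · intro z hz
                rw [mem_ball] at hz ⊢
                have hyc : dist (x + t • (c - x)) c = D - r₀ / 2 := by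
                  have hrw : (x + t • (c - x)) - c = (1 - t) • (x - c) := by module
                  rw [dist_eq_norm, hrw, norm_smul, Real.norm_eq_abs,
                    abs_of_pos (by linarith)]
                  have : ‖x - c‖ = D := by rw [hD2, dist_eq_norm]
                  rw [this, ht]
                  have hDne : D ≠ 0 := ne_of_gt hD0
                  field_simp
                calc dist z c ≤ dist z (x + t • (c - x)) + dist (x + t • (c - x)) c :=
                    dist_triangle _ _ _
                  _ < r₀ / 2 + (D - r₀ / 2) := by rw [hyc]; linarith
                  _ = D := by ring
                  _ < r := hxcd
          have hy0m : ball y (r₀ / 2) ⊆ ball 0 (m : ℝ) := by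
            intro z hz
            rw [mem_ball] at hz ⊢
            calc dist z 0 ≤ dist z y + dist y x + dist x 0 := dist_triangle4 _ _ _ _
              _ < r₀ / 2 + r₀ / 2 + ‖x‖ := by rw [dist_zero_right]; linarith
              _ ≤ (m : ℝ) := by
                  push_cast [hm]
                  have : r₀ ≤ 1 / 2 := by rw [hr₀]; linarith
                  nlinarith [hxnorm]
          have hμball : δ ≤ μ (ball c r) := by
            have h1 : δ ≤ μ (ball y (r₀ / 2)) := by
              have := hmu_ge m _ measurableSet_ball hy0m
              rwa [hball y (r₀ / 2) (by positivity)] at this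
            exact h1.trans (measure_mono hysub)
          exact ENNReal.div_le_div (hIball c r) hμball
        -- combine
        have hbound : noncenteredMaximal μ f x ≤ max Ks (I / δ) := by
          refine iSup_le fun c => iSup_le fun r => iSup_le fun hr => iSup_le fun hxc => ?_
          rcases lt_or_ge r r₀ with h | h
          · exact (hsmall c r hr hxc h).trans (le_max_left _ _)
          · exact (hlarge c r hr hxc h).trans (le_max_right _ _)
        refine lt_of_le_of_lt hbound (max_lt ?_ ?_)
        · refine ENNReal.div_lt_top ?_ ?_
          · exact ENNReal.mul_ne_top (ENNReal.mul_ne_top hLtop ENNReal.ofReal_ne_top)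
              ENNReal.ofReal_ne_top
          · simp [ENNReal.ofReal_pos]; exact hcc m
        · exact ENNReal.div_lt_top hItop hδ0
      -- a.e. finiteness
      have hae2 : ∀ᵐ x ∂μ, noncenteredMaximal μ f x < ⊤ := by
        filter_upwards [Besicovitch.ae_tendsto_rnDeriv ρ μ, Measure.rnDeriv_lt_top ρ μ]
          with x hx1 hx2
        obtain ⟨n, hn⟩ : ∃ n : ℕ, x ∈ ball (0 : EuclideanSpace ℝ (Fin d)) (n : ℝ) := by
          have := mem_univ x
          rw [← iUnion_ball_nat (0 : EuclideanSpace ℝ (Fin d))] at this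
          exact mem_iUnion.1 this
        exact hpt n x hn hx1 hx2
      have h0 : μ {x | noncenteredMaximal μ f x = ⊤} = 0 := by
        rw [ae_iff] at hae2
        refine measure_mono_null ?_ hae2
        intro x hx
        simp only [mem_setOf_eq] at hx ⊢
        rw [hx]
        exact lt_irrefl ⊤
      refine ⟨Or.inl h0, Or.inl ?_⟩
      refine measure_mono_null ?_ h0
      intro x hx
      simp only [mem_setOf_eq] at hx ⊢
      exact eq_top_iff.2 (hx ▸ hcn x)
  exact ⟨fun f _ => (key f).1, fun f _ => (key f).2⟩
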